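/- Let inc^val(n,k) be the number of increasing permutations of {1,...,n} with exactly k valleys. Then for all n ≥ 1 and k ≥ 1: inc^val(n+1, k) = 2·inc^val(n, k) + Σ_{i=1}^{n−1} C(n,i)·2^(i−1)·inc^val(n−i, k−1), with inc^val(0,0) = 1 and inc^val(n,0) = 2^(n−1) for n ≥ 1. -/

import Mathlib

open Finset

/-- `ℓ` is a valley of `π`: `2 ≤ ℓ ≤ n-1` (1-based) with `π(ℓ-1) > π(ℓ) < π(ℓ+1)`. -/
def IsValley {n : ℕ} (π : Equiv.Perm (Fin n)) (ℓ : Fin n) : Prop :=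
  1 ≤ ℓ.val ∧ ∃ h2 : ℓ.val + 1 < n,
    π ⟨ℓ.val - 1, lt_of_le_of_lt (Nat.sub_le _ _) ℓ.isLt⟩ > π ℓ ∧ π ℓ < π ⟨ℓ.val + 1, h2⟩

/-- number of valleys of `π` -/
noncomputable def valCount {n : ℕ} (π : Equiv.Perm (Fin n)) : ℕ :=
  {ℓ : Fin n | IsValley π ℓ}.ncard

/-- `ℓ` is a peak of `π`. -/
def IsPeak {n : ℕ} (π : Equiv.Perm (Fin n)) (ℓ : Fin n) : Prop :=
  1 ≤ ℓ.val ∧ ∃ h2 : ℓ.val + 1 < n,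
    π ⟨ℓ.val - 1, lt_of_le_of_lt (Nat.sub_le _ _) ℓ.isLt⟩ < π ℓ ∧ π ℓ > π ⟨ℓ.val + 1, h2⟩

/-- number of peaks of `π` -/
noncomputable def peakCount {n : ℕ} (π : Equiv.Perm (Fin n)) : ℕ :=
  {ℓ : Fin n | IsPeak π ℓ}.ncard

/-- number of descents of `π` -/
noncomputable def desCount {n : ℕ} (π : Equiv.Perm (Fin n)) : ℕ :=
  {ℓ : Fin n | ∃ h : ℓ.val + 1 < n, π ⟨ℓ.val + 1, h⟩ < π ℓ}.ncard

/-- `π` is increasing: the values at its valleys, from left to right, strictly increase. -/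
def Increasing {n : ℕ} (π : Equiv.Perm (Fin n)) : Prop :=
  ∀ i j : Fin n, IsValley π i → IsValley π j → i < j → π i < π j

/-- `ℓ` is the first position of a (maximal increasing) run of `π`. -/
def IsRunStart {n : ℕ} (π : Equiv.Perm (Fin n)) (ℓ : Fin n) : Prop :=
  ℓ.val = 0 ∨ π ⟨ℓ.val - 1, lt_of_le_of_lt (Nat.sub_le _ _) ℓ.isLt⟩ > π ℓ

/-- number of (maximal increasing) runs of `π` -/
noncomputable def runCount {n : ℕ} (π : Equiv.Perm (Fin n)) : ℕ :=
  {ℓ : Fin n | IsRunStart π ℓ}.ncard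

/-- `π` is flattened: the first entries of its runs, from left to right, increase. -/
def Flattened {n : ℕ} (π : Equiv.Perm (Fin n)) : Prop :=
  ∀ i j : Fin n, IsRunStart π i → IsRunStart π j → i < j → π i < π j

/-- `π i` is a right-to-left minimum of `π`. -/
def IsRLMin {n : ℕ} (π : Equiv.Perm (Fin n)) (i : Fin n) : Prop :=
  ∀ j : Fin n, i < j → π i < π j

/-- number of right-to-left minima of `π` -/
noncomputable def rlmCount {n : ℕ} (π : Equiv.Perm (Fin n)) : ℕ :=
  {i : Fin n | IsRLMin π i}.ncard

/-- number of increasing permutations of `{1,...,n}` with exactly `k` valleys -/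
noncomputable def incVal (n k : ℕ) : ℕ :=
  {π : Equiv.Perm (Fin n) | Increasing π ∧ valCount π = k}.ncard

namespace IncValAux


def VAt (l : List ℕ) (i : ℕ) : Prop :=
  1 ≤ i ∧ i + 1 < l.length ∧ l.getD i 0 < l.getD (i-1) 0 ∧ l.getD i 0 < l.getD (i+1) 0

instance (l : List ℕ) : DecidablePred (VAt l) := fun _ => by unfold VAt; infer_instance

def vset (l : List ℕ) : Finset ℕ := (Finset.range l.length).filter (VAt l)

lemma mem_vset {l : List ℕ} {i : ℕ} : i ∈ vset l ↔ VAt l i := by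
  simp only [vset, Finset.mem_filter, Finset.mem_range]
  exact ⟨fun h => h.2, fun h => ⟨Nat.lt_of_succ_lt h.2.1, h⟩⟩

def Good (l : List ℕ) (k : ℕ) : Prop :=
  (vset l).card = k ∧ ∀ i ∈ vset l, ∀ j ∈ vset l, i < j → l.getD i 0 < l.getD j 0

instance (l : List ℕ) (k : ℕ) : Decidable (Good l k) := by unfold Good; infer_instance

def arr (S : Finset ℕ) : Finset (List ℕ) := (S.sort (·≤·)).permutations.toFinset

lemma mem_arr {S : Finset ℕ} {l : List ℕ} : l ∈ arr S ↔ l.Nodup ∧ l.toFinset = S := by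
  simp only [arr, List.mem_toFinset, List.mem_permutations]
  constructor
  · intro h
    exact ⟨h.nodup_iff.mpr (Finset.sort_nodup S _),
      by rw [List.toFinset_eq_of_perm _ _ h, Finset.sort_toFinset]⟩
  · rintro ⟨h1, h2⟩
    exact List.perm_of_nodup_nodup_toFinset_eq h1 (Finset.sort_nodup S _)
      (by rw [h2, Finset.sort_toFinset])

lemma length_of_mem_arr {S : Finset ℕ} {l : List ℕ} (h : l ∈ arr S) : l.length = S.card := by
  rw [mem_arr] at h
  rw [← h.2, List.toFinset_card_of_nodup h.1]

def cnt (S : Finset ℕ) (k : ℕ) : ℕ := ((arr S).filter (fun l => Good l k)).card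

/-! Bridge -/

def toL {n : ℕ} (π : Equiv.Perm (Fin n)) : List ℕ := List.ofFn (fun i => (π i : ℕ))

lemma toL_length {n : ℕ} (π : Equiv.Perm (Fin n)) : (toL π).length = n := List.length_ofFn

lemma toL_getD {n : ℕ} (π : Equiv.Perm (Fin n)) {i : ℕ} (h : i < n) :
    (toL π).getD i 0 = (π ⟨i, h⟩ : ℕ) := by
  rw [List.getD_eq_getElem _ _ (by rw [toL_length]; exact h)]
  exact List.getElem_ofFn _

lemma toL_mem_arr {n : ℕ} (π : Equiv.Perm (Fin n)) : toL π ∈ arr (Finset.range n) := by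
  rw [mem_arr]
  constructor
  · rw [toL, List.nodup_ofFn]
    exact fun a b h => π.injective (Fin.val_injective h)
  · ext x
    simp only [toL, List.mem_toFinset, List.mem_ofFn, Finset.mem_range]
    constructor
    · rintro ⟨i, rfl⟩; exact (π i).isLt
    · intro hx; exact ⟨π.symm ⟨x, hx⟩, by simp⟩

lemma VAt_toL {n : ℕ} (π : Equiv.Perm (Fin n)) (i : ℕ) :
    VAt (toL π) i ↔ ∃ h : i < n, IsValley π ⟨i, h⟩ := by
  constructor
  · rintro ⟨h1, h2, h3, h4⟩
    rw [toL_length] at h2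
    have hi : i < n := Nat.lt_of_succ_lt h2
    refine ⟨hi, h1, h2, ?_, ?_⟩
    · rw [gt_iff_lt, Fin.lt_def]
      rwa [toL_getD π hi, toL_getD π (lt_of_le_of_lt (Nat.sub_le _ _) hi)] at h3
    · rw [Fin.lt_def]
      rwa [toL_getD π hi, toL_getD π h2] at h4
  · rintro ⟨hi, h1, h2, h3, h4⟩
    refine ⟨h1, by rw [toL_length]; exact h2, ?_, ?_⟩
    · rw [toL_getD π hi, toL_getD π (lt_of_le_of_lt (Nat.sub_le _ _) hi)]
      exact h3
    · rw [toL_getD π hi, toL_getD π h2]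
      exact h4

lemma valCount_toL {n : ℕ} (π : Equiv.Perm (Fin n)) : valCount π = (vset (toL π)).card := by
  rw [valCount, Set.ncard_eq_toFinset_card _ (Set.toFinite _)]
  refine Finset.card_nbij (fun ℓ => ℓ.val) ?_ ?_ ?_
  · intro a ha
    rw [Finset.mem_coe, Set.Finite.mem_toFinset] at ha
    rw [Finset.mem_coe, mem_vset, VAt_toL]
    exact ⟨a.isLt, ha⟩
  · intro a _ b _ h; exact Fin.val_injective h
  · intro i hi
    rw [Finset.mem_coe, mem_vset, VAt_toL] at hi
    obtain ⟨h, hv⟩ := hi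
    exact ⟨⟨i, h⟩, by rw [Set.Finite.coe_toFinset]; exact hv, rfl⟩

lemma increasing_toL {n : ℕ} (π : Equiv.Perm (Fin n)) :
    Increasing π ↔ ∀ i ∈ vset (toL π), ∀ j ∈ vset (toL π),
      i < j → (toL π).getD i 0 < (toL π).getD j 0 := by
  constructor
  · intro H i hi j hj hij
    rw [mem_vset, VAt_toL] at hi hj
    obtain ⟨hi', hvi⟩ := hi
    obtain ⟨hj', hvj⟩ := hj
    rw [toL_getD π hi', toL_getD π hj']
    exact H _ _ hvi hvj hij
  · intro H i j hvi hvj hij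
    have h1 := (mem_vset (l := toL π) (i := i.val)).2 ((VAt_toL π i.val).2 ⟨i.isLt, hvi⟩)
    have h2 := (mem_vset (l := toL π) (i := j.val)).2 ((VAt_toL π j.val).2 ⟨j.isLt, hvj⟩)
    have := H _ h1 _ h2 hij
    rw [toL_getD π i.isLt, toL_getD π j.isLt] at this
    exact this

lemma incVal_eq_cnt (n k : ℕ) : incVal n k = cnt (Finset.range n) k := by
  rw [incVal, Set.ncard_eq_toFinset_card _ (Set.toFinite _), cnt]
  refine Finset.card_nbij (fun π => toL π) ?_ ?_ ?_
  · intro π hπ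
    rw [Finset.mem_coe, Set.Finite.mem_toFinset] at hπ
    rw [Finset.mem_coe, Finset.mem_filter]
    refine ⟨toL_mem_arr π, ?_, ?_⟩
    · rw [← valCount_toL]; exact hπ.2
    · exact (increasing_toL π).1 hπ.1
  · intro a _ b _ h
    have h' : toL a = toL b := h
    ext i
    have : (toL a).getD i.val 0 = (toL b).getD i.val 0 := by rw [h']
    rw [toL_getD a i.isLt, toL_getD b i.isLt] at this
    exact this
  · intro l hl
    rw [Finset.mem_coe, Finset.mem_filter] at hl
    obtain ⟨hla, hgood⟩ := hl
    have hlen : l.length = n := by rw [length_of_mem_arr hla, Finset.card_range]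
    have hmem : ∀ i : Fin n, l.getD i.val 0 < n := by
      intro i
      have h1 : l.getD i.val 0 ∈ l := by
        rw [List.getD_eq_getElem _ _ (by omega : i.val < l.length)]
        exact List.getElem_mem _
      have := (mem_arr.1 hla).2 ▸ (List.mem_toFinset.2 h1)
      simpa using this
    set f : Fin n → Fin n := fun i => ⟨l.getD i.val 0, hmem i⟩ with hf
    have hinj : Function.Injective f := by
      intro a b hab
      have : l.getD a.val 0 = l.getD b.val 0 := congrArg Fin.val hab
      rw [List.getD_eq_getElem _ _ (by omega : a.val < l.length),
        List.getD_eq_getElem _ _ (by omega : b.val < l.length)] at this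
      have := (List.Nodup.getElem_inj_iff (mem_arr.1 hla).1).1 this
      exact Fin.val_injective this
    set π : Equiv.Perm (Fin n) := Equiv.ofBijective f (Finite.injective_iff_bijective.1 hinj)
    have htoL : toL π = l := by
      refine List.ext_getElem (by rw [toL_length, hlen]) ?_
      intro i h1 h2
      have : (toL π).getD i 0 = l.getD i 0 := by
        rw [toL_getD π (by rwa [toL_length] at h1)]
        show (f ⟨i, _⟩ : ℕ) = _
        rfl
      rwa [List.getD_eq_getElem _ _ h1, List.getD_eq_getElem _ _ h2] at this
    refine ⟨π, ?_, htoL⟩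
    simp only [Finset.mem_coe, Set.Finite.mem_toFinset]
    rw [Set.mem_setOf_eq]
    constructor
    · rw [increasing_toL, htoL]; exact hgood.2
    · rw [valCount_toL, htoL]; exact hgood.1


/-! Invariance -/


lemma getD_mem {l : List ℕ} {i : ℕ} (h : i < l.length) : l.getD i 0 ∈ l := by
  rw [List.getD_eq_getElem _ _ h]; exact List.getElem_mem _

lemma getD_map (f : ℕ → ℕ) (l : List ℕ) {i : ℕ} (h : i < l.length) :
    (l.map f).getD i 0 = f (l.getD i 0) := by
  rw [List.getD_eq_getElem _ _ (by simpa using h), List.getD_eq_getElem _ _ h]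
  simp

lemma VAt_map (f : ℕ → ℕ) (l : List ℕ) (hm : ∀ a ∈ l, ∀ b ∈ l, (a < b ↔ f a < f b)) (i : ℕ) :
    VAt (l.map f) i ↔ VAt l i := by
  unfold VAt
  rw [List.length_map]
  constructor
  · rintro ⟨h1, h2, h3, h4⟩
    have hi : i < l.length := Nat.lt_of_succ_lt h2
    rw [getD_map f l hi, getD_map f l (lt_of_le_of_lt (Nat.sub_le _ _) hi)] at h3
    rw [getD_map f l hi, getD_map f l h2] at h4
    exact ⟨h1, h2, (hm _ (getD_mem hi) _ (getD_mem (lt_of_le_of_lt (Nat.sub_le _ _) hi))).2 h3,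
      (hm _ (getD_mem hi) _ (getD_mem h2)).2 h4⟩
  · rintro ⟨h1, h2, h3, h4⟩
    have hi : i < l.length := Nat.lt_of_succ_lt h2
    rw [getD_map f l hi, getD_map f l (lt_of_le_of_lt (Nat.sub_le _ _) hi), getD_map f l h2]
    exact ⟨h1, h2, (hm _ (getD_mem hi) _ (getD_mem (lt_of_le_of_lt (Nat.sub_le _ _) hi))).1 h3,
      (hm _ (getD_mem hi) _ (getD_mem h2)).1 h4⟩

lemma vset_map (f : ℕ → ℕ) (l : List ℕ) (hm : ∀ a ∈ l, ∀ b ∈ l, (a < b ↔ f a < f b)) :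
    vset (l.map f) = vset l := by
  ext i
  rw [mem_vset, mem_vset, VAt_map f l hm]

lemma good_map (f : ℕ → ℕ) (l : List ℕ) (hm : ∀ a ∈ l, ∀ b ∈ l, (a < b ↔ f a < f b)) (k : ℕ) :
    Good (l.map f) k ↔ Good l k := by
  unfold Good
  rw [vset_map f l hm]
  have hgt : ∀ i ∈ vset l, ∀ j ∈ vset l, i < j →
      ((l.map f).getD i 0 < (l.map f).getD j 0 ↔ l.getD i 0 < l.getD j 0) := by
    intro i hi j hj _
    rw [mem_vset] at hi hj
    have h1 : i < l.length := Nat.lt_of_succ_lt hi.2.1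
    have h2 : j < l.length := Nat.lt_of_succ_lt hj.2.1
    rw [getD_map f l h1, getD_map f l h2]
    exact (hm _ (getD_mem h1) _ (getD_mem h2)).symm
  constructor
  · rintro ⟨hc, hinc⟩
    exact ⟨hc, fun i hi j hj hij => (hgt i hi j hj hij).1 (hinc i hi j hj hij)⟩
  · rintro ⟨hc, hinc⟩
    exact ⟨hc, fun i hi j hj hij => (hgt i hi j hj hij).2 (hinc i hi j hj hij)⟩

lemma cnt_congr (S T : Finset ℕ) (f g : ℕ → ℕ)
    (hfS : ∀ a ∈ S, f a ∈ T) (hgT : ∀ b ∈ T, g b ∈ S)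
    (hgf : ∀ a ∈ S, g (f a) = a) (hfg : ∀ b ∈ T, f (g b) = b)
    (hmono : ∀ a ∈ S, ∀ b ∈ S, a < b ↔ f a < f b) (k : ℕ) : cnt S k = cnt T k := by
  unfold cnt
  refine Finset.card_nbij (fun l => l.map f) ?_ ?_ ?_
  · intro l hl
    rw [Finset.mem_coe, Finset.mem_filter] at hl ⊢
    obtain ⟨hla, hg⟩ := hl
    rw [mem_arr] at hla
    have hmeml : ∀ a ∈ l, a ∈ S := fun a ha => hla.2 ▸ List.mem_toFinset.2 ha
    constructor
    · rw [mem_arr]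
      constructor
      · exact List.Nodup.map_on (fun a ha b hb hab => by
          rw [← hgf a (hmeml a ha), ← hgf b (hmeml b hb), hab]) hla.1
      · ext b
        simp only [List.mem_toFinset, List.mem_map]
        constructor
        · rintro ⟨a, ha, rfl⟩; exact hfS a (hmeml a ha)
        · intro hb
          refine ⟨g b, ?_, hfg b hb⟩
          rw [← List.mem_toFinset, hla.2]
          exact hgT b hb
    · exact (good_map f l (fun a ha b hb => hmono a (hmeml a ha) b (hmeml b hb)) k).2 hg
  · intro l1 h1 l2 h2 heq
    simp only [Finset.mem_coe, Finset.mem_filter, mem_arr] at h1 h2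
    have e1 : (l1.map f).map g = l1 := by
      rw [List.map_map]
      exact List.map_congr_left (fun a ha => hgf a (h1.1.2 ▸ List.mem_toFinset.2 ha)) |>.trans l1.map_id
    have e2 : (l2.map f).map g = l2 := by
      rw [List.map_map]
      exact List.map_congr_left (fun a ha => hgf a (h2.1.2 ▸ List.mem_toFinset.2 ha)) |>.trans l2.map_id
    have heq' : l1.map f = l2.map f := heq
    rw [← e1, ← e2, heq']
  · intro t ht
    simp only [Finset.mem_coe, Finset.mem_filter] at ht
    obtain ⟨hta, htg⟩ := ht
    rw [mem_arr] at hta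
    have hmemt : ∀ b ∈ t, b ∈ T := fun b hb => hta.2 ▸ List.mem_toFinset.2 hb
    have hmapgt : ∀ a ∈ t.map g, a ∈ S := by
      intro a ha
      rw [List.mem_map] at ha
      obtain ⟨b, hb, rfl⟩ := ha
      exact hgT b (hmemt b hb)
    have e3 : (t.map g).map f = t := by
      rw [List.map_map]
      exact List.map_congr_left (fun b hb => hfg b (hmemt b hb)) |>.trans t.map_id
    refine ⟨t.map g, ?_, e3⟩
    simp only [Finset.mem_coe, Finset.mem_filter]
    constructor
    · rw [mem_arr]
      constructor
      · exact List.Nodup.map_on (fun a ha b hb hab => by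
          rw [← hfg a (hmemt a ha), ← hfg b (hmemt b hb), hab]) hta.1
      · ext a
        simp only [List.mem_toFinset, List.mem_map]
        constructor
        · rintro ⟨b, hb, rfl⟩; exact hgT b (hmemt b hb)
        · intro ha
          refine ⟨f a, ?_, hgf a ha⟩
          rw [← List.mem_toFinset, hta.2]
          exact hfS a ha
    · have := (good_map f (t.map g) (fun a ha b hb => hmono a (hmapgt a ha) b (hmapgt b hb)) k)
      rw [e3] at this
      exact this.1 htg

lemma cnt_eq_range (S : Finset ℕ) (k : ℕ) : cnt S k = cnt (Finset.range S.card) k := by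
  set m := S.card with hm
  have e := S.orderIsoOfFin hm.symm
  refine cnt_congr S (Finset.range m)
    (fun a => if h : a ∈ S then (e.symm ⟨a, h⟩ : Fin m).val else 0)
    (fun b => if h : b < m then (e ⟨b, h⟩ : ℕ) else 0) ?_ ?_ ?_ ?_ ?_ k
  · intro a ha
    rw [dif_pos ha, Finset.mem_range]
    exact (e.symm ⟨a, ha⟩).isLt
  · intro b hb
    rw [Finset.mem_range] at hb
    rw [dif_pos hb]
    exact (e ⟨b, hb⟩).2
  · intro a ha
    rw [dif_pos ha, dif_pos (e.symm ⟨a, ha⟩).isLt]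
    have : (⟨(e.symm ⟨a, ha⟩).val, (e.symm ⟨a, ha⟩).isLt⟩ : Fin m) = e.symm ⟨a, ha⟩ := rfl
    rw [this, OrderIso.apply_symm_apply]
  · intro b hb
    rw [Finset.mem_range] at hb
    rw [dif_pos hb, dif_pos (e ⟨b, hb⟩).2]
    have : (⟨(e ⟨b, hb⟩ : ℕ), (e ⟨b, hb⟩).2⟩ : {x // x ∈ S}) = e ⟨b, hb⟩ := rfl
    rw [this, OrderIso.symm_apply_apply]
  · intro a ha b hb
    rw [dif_pos ha, dif_pos hb, ← Fin.lt_def, OrderIso.lt_iff_lt, Subtype.mk_lt_mk]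

/-! Unimodal count -/

lemma getD_append_left {a b : List ℕ} {i : ℕ} (h : i < a.length) :
    (a ++ b).getD i 0 = a.getD i 0 := by
  rw [List.getD_eq_getElem _ _ (by rw [List.length_append]; omega),
    List.getD_eq_getElem _ _ h]
  exact List.getElem_append_left h

lemma getD_append_right {a b : List ℕ} {i : ℕ} (h : a.length ≤ i) :
    (a ++ b).getD i 0 = b.getD (i - a.length) 0 := by
  by_cases h2 : i < a.length + b.length
  · rw [List.getD_eq_getElem _ _ (by rw [List.length_append]; omega),
      List.getD_eq_getElem _ _ (by omega)]
    exact List.getElem_append_right h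
  · rw [List.getD_eq_default _ _ (by rw [List.length_append]; omega),
      List.getD_eq_default _ _ (by omega)]

lemma chain'_lt_getD {l : List ℕ} (h : l.Chain' (· < ·)) {i : ℕ} (hi : i + 1 < l.length) :
    l.getD i 0 < l.getD (i+1) 0 := by
  rw [List.getD_eq_getElem _ _ (by omega), List.getD_eq_getElem _ _ hi]
  exact List.isChain_iff_getElem.1 h i (by omega)

lemma chain'_gt_getD {l : List ℕ} (h : l.Chain' (· > ·)) {i : ℕ} (hi : i + 1 < l.length) :
    l.getD (i+1) 0 < l.getD i 0 := by
  rw [List.getD_eq_getElem _ _ hi, List.getD_eq_getElem _ _ (by omega)]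
  exact List.isChain_iff_getElem.1 h i (by omega)

lemma noval_updown {a b : List ℕ} (ha : a.Chain' (· < ·)) (hb : b.Chain' (· > ·)) (i : ℕ) :
    ¬ VAt (a ++ b) i := by
  rintro ⟨h1, h2, h3, h4⟩
  rw [List.length_append] at h2
  by_cases hc : i < a.length
  · have : (a ++ b).getD (i-1) 0 < (a ++ b).getD i 0 := by
      rw [getD_append_left hc, getD_append_left (by omega)]
      have := chain'_lt_getD ha (i := i - 1) (by omega)
      rwa [Nat.sub_add_cancel h1] at this
    omega
  · have hc' : a.length ≤ i := by omega
    have : (a ++ b).getD (i+1) 0 < (a ++ b).getD i 0 := by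
      rw [getD_append_right hc', getD_append_right (by omega)]
      have := chain'_gt_getD hb (i := i - a.length) (by omega)
      have he : i + 1 - a.length = (i - a.length) + 1 := by omega
      rwa [he]
    omega

lemma good_zero_iff (l : List ℕ) : Good l 0 ↔ ∀ i, ¬ VAt l i := by
  constructor
  · rintro ⟨hc, -⟩ i hv
    have hmem : i ∈ vset l := mem_vset.2 hv
    rw [Finset.card_eq_zero] at hc
    rw [hc] at hmem
    exact absurd hmem (Finset.notMem_empty i)
  · intro h
    have he : vset l = ∅ := by
      ext i
      simp only [Finset.notMem_empty, iff_false]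
      intro hi; exact h i (mem_vset.1 hi)
    rw [Good, he]
    simp

lemma chain_lt_unique {l1 l2 : List ℕ} (h1 : l1.Chain' (· < ·)) (h2 : l2.Chain' (· < ·))
    (ht : l1.toFinset = l2.toFinset) : l1 = l2 := by
  have p1 : l1.Pairwise (· < ·) := List.isChain_iff_pairwise.1 h1
  have p2 : l2.Pairwise (· < ·) := List.isChain_iff_pairwise.1 h2
  have n1 : l1.Nodup := p1.imp (fun h => Nat.ne_of_lt h)
  have n2 : l2.Nodup := p2.imp (fun h => Nat.ne_of_lt h)
  exact List.Perm.eq_of_pairwise (fun _ _ _ _ h1 h2 => absurd (h1.trans h2) (lt_irrefl _)) p1 p2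
    (List.perm_of_nodup_nodup_toFinset_eq n1 n2 ht)

def mkUD (m : ℕ) (T : Finset ℕ) : List ℕ :=
  (((Finset.range (m-1)) \ T).sort (·≤·) ++ [m-1]) ++ (T.sort (·≤·)).reverse

lemma sort_chain_lt (S : Finset ℕ) : (S.sort (·≤·)).Chain' (· < ·) :=
  (Finset.sortedLT_sort S).isChain

lemma mkUD_left_chain (m : ℕ) (T : Finset ℕ) :
    ((((Finset.range (m-1)) \ T).sort (·≤·)) ++ [m-1]).Chain' (· < ·) := by
  unfold List.Chain'
  rw [List.isChain_append]
  refine ⟨sort_chain_lt _, List.isChain_singleton _, ?_⟩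
  intro x hx y hy
  have hxm : x ∈ (Finset.range (m-1)) \ T := by
    rw [← Finset.mem_sort (·≤·)]
    exact List.mem_of_mem_getLast? hx
  simp only [List.head?_cons, Option.mem_def, Option.some.injEq] at hy
  subst hy
  have h2 := Finset.mem_sdiff.1 hxm
  have h3 := Finset.mem_range.1 h2.1
  omega

lemma mkUD_right_chain (T : Finset ℕ) : ((T.sort (·≤·)).reverse).Chain' (· > ·) := by
  unfold List.Chain'
  rw [List.isChain_reverse]
  exact sort_chain_lt T

lemma mkUD_mem {m : ℕ} (hm : 1 ≤ m) {T : Finset ℕ} (hT : T ⊆ Finset.range (m-1)) :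
    mkUD m T ∈ arr (Finset.range m) := by
  rw [mem_arr, mkUD]
  have hnm : (m-1) ∉ Finset.range (m-1) \ T := by simp
  constructor
  · rw [List.nodup_append', List.nodup_append']
    refine ⟨⟨Finset.sort_nodup _ _, List.nodup_singleton _, ?_⟩,
      List.nodup_reverse.2 (Finset.sort_nodup _ _), ?_⟩
    · intro x hx hx1
      rw [List.mem_singleton] at hx1; subst hx1
      rw [Finset.mem_sort] at hx
      exact hnm hx
    · intro x hx hx2
      rw [List.mem_reverse, Finset.mem_sort] at hx2
      have hxr := Finset.mem_range.1 (hT hx2)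
      rcases List.mem_append.1 hx with h | h
      · rw [Finset.mem_sort] at h
        exact (Finset.mem_sdiff.1 h).2 hx2
      · rw [List.mem_singleton] at h; omega
  · ext x
    simp only [List.toFinset_append, List.toFinset_reverse, Finset.sort_toFinset,
      Finset.mem_union, Finset.mem_sdiff, Finset.mem_range, List.toFinset_cons,
      List.toFinset_nil, LawfulSingleton.insert_empty_eq, Finset.mem_singleton]
    constructor
    · rintro ((⟨h, -⟩ | rfl) | h)
      · omega
      · omega
      · have := Finset.mem_range.1 (hT h); omega
    · intro h
      by_cases hx : x ∈ T
      · right; exact hx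
      · left
        by_cases hx2 : x = m - 1
        · right; exact hx2
        · left; exact ⟨by omega, hx⟩

def pickT (m : ℕ) (l : List ℕ) : Finset ℕ := (l.drop (l.idxOf (m-1) + 1)).toFinset

lemma pickT_mkUD {m : ℕ} {T : Finset ℕ} (hT : T ⊆ Finset.range (m-1)) :
    pickT m (mkUD m T) = T := by
  have hnm : (m-1) ∉ ((Finset.range (m-1)) \ T).sort (·≤·) := by
    rw [Finset.mem_sort]; simp
  rw [pickT, mkUD]
  rw [List.append_assoc, List.singleton_append]
  rw [List.idxOf_append_of_notMem hnm, List.idxOf_cons_self, Nat.add_zero]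
  rw [← List.singleton_append, ← List.append_assoc]
  rw [List.drop_left' (by rw [List.length_append, List.length_singleton])]
  rw [List.toFinset_reverse, Finset.sort_toFinset]

lemma structure_noval {m : ℕ} (hm : 1 ≤ m) {l : List ℕ} (hl : l ∈ arr (Finset.range m))
    (hnv : ∀ i, ¬ VAt l i) :
    pickT m l ⊆ Finset.range (m-1) ∧ l = mkUD m (pickT m l) := by
  obtain ⟨hnd, htf⟩ := mem_arr.1 hl
  have hlen : l.length = m := by
    rw [← Finset.card_range m, ← htf, List.toFinset_card_of_nodup hnd]
  have hmem : m - 1 ∈ l := by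
    rw [← List.mem_toFinset, htf, Finset.mem_range]; omega
  set q := l.idxOf (m-1) with hqdef
  have hq : q < l.length := List.idxOf_lt_length_iff.2 hmem
  have dq' : l[q]'hq = m - 1 := List.getElem_idxOf hq
  have dq : l.getD q 0 = m - 1 := by
    rw [List.getD_eq_getElem _ _ hq]; exact dq'
  have hub : ∀ i, i < l.length → l.getD i 0 < m := by
    intro i hi
    have h1 : l.getD i 0 ∈ l := getD_mem hi
    rw [← List.mem_toFinset, htf, Finset.mem_range] at h1
    exact h1
  have hne : ∀ i j, i < l.length → j < l.length → i ≠ j → l.getD i 0 ≠ l.getD j 0 := by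
    intro i j hi hj hij
    rw [List.getD_eq_getElem _ _ hi, List.getD_eq_getElem _ _ hj]
    intro h
    exact hij ((hnd.getElem_inj_iff).1 h)
  have hmax : ∀ i, i < l.length → i ≠ q → l.getD i 0 < m - 1 := by
    intro i hi hiq
    have h1 := hub i hi
    have h2 := hne i q hi hq hiq
    rw [dq] at h2
    omega
  have claim1 : ∀ j, j < q → l.getD j 0 < l.getD (j+1) 0 := by
    have key : ∀ t j, j < q → q - j = t + 1 → l.getD j 0 < l.getD (j+1) 0 := by
      intro t
      induction t with
      | zero =>
        intro j hj he
        have hjq : j + 1 = q := by omega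
        rw [hjq, dq]
        exact hmax j (by omega) (by omega)
      | succ t ih =>
        intro j hj he
        have hj1 : j + 1 < q := by omega
        have ih1 := ih (j+1) hj1 (by omega)
        by_contra hcon
        have hne1 := hne j (j+1) (by omega) (by omega) (by omega)
        have hlt : l.getD (j+1) 0 < l.getD j 0 := by omega
        exact hnv (j+1) ⟨by omega, by omega, by simpa using hlt, ih1⟩
    intro j hj
    exact key (q - j - 1) j hj (by omega)
  have claim2 : ∀ j, q ≤ j → j + 1 < l.length → l.getD (j+1) 0 < l.getD j 0 := by
    intro j hqj
    induction j, hqj using Nat.le_induction with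
    | base =>
      intro h1
      rw [dq]
      exact hmax (q+1) h1 (by omega)
    | succ j hqj ih =>
      intro h1
      have ihr := ih (by omega)
      by_contra hcon
      have hne1 := hne (j+1) (j+1+1) (by omega) (by omega) (by omega)
      have hlt : l.getD (j+1) 0 < l.getD (j+1+1) 0 := by omega
      exact hnv (j+1) ⟨by omega, by omega, by simpa using ihr, hlt⟩
  have hqm : m - 1 ∉ l.drop (q+1) := by
    intro hmem2
    rw [List.mem_iff_getElem] at hmem2
    obtain ⟨i, hi, hgi⟩ := hmem2
    rw [List.length_drop] at hi
    rw [List.getElem_drop] at hgi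
    rw [← dq'] at hgi
    have := (hnd.getElem_inj_iff).1 hgi
    omega
  have hTdef : pickT m l = (l.drop (q+1)).toFinset := rfl
  set T := pickT m l with hT
  have hm1T : m - 1 ∉ T := fun h => hqm (List.mem_toFinset.1 (hTdef ▸ h))
  have hTsub : T ⊆ Finset.range (m-1) := by
    intro x hx
    rw [hTdef, List.mem_toFinset] at hx
    have hxl : x ∈ l := List.mem_of_mem_drop hx
    have h1 : x < m := by
      have := List.mem_toFinset.2 hxl
      rw [htf, Finset.mem_range] at this
      exact this
    have h2 : x ≠ m - 1 := fun h => hqm (h ▸ hx)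
    rw [Finset.mem_range]; omega
  have chain_tk : (l.take (q+1)).Chain' (· < ·) := by
    unfold List.Chain'
    rw [List.isChain_iff_getElem]
    intro i hi
    rw [List.length_take] at hi
    have hi' : i < q := by omega
    show (l.take (q+1)).get ⟨i, by omega⟩ < (l.take (q+1)).get ⟨i+1, by omega⟩
    rw [List.get_eq_getElem, List.get_eq_getElem]
    simp only [Fin.val_mk]
    rw [List.getElem_take, List.getElem_take]
    have hcl := claim1 i hi'
    have e1 : l.getD i 0 = l[i]'(by omega) := List.getD_eq_getElem _ _ (by omega)
    have e2 : l.getD (i+1) 0 = l[i+1]'(by omega) := List.getD_eq_getElem _ _ (by omega)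
    rw [e1, e2] at hcl
    exact hcl
  have chain_dr : (l.drop (q+1)).Chain' (· > ·) := by
    unfold List.Chain'
    rw [List.isChain_iff_getElem]
    intro i hi
    rw [List.length_drop] at hi
    show (l.drop (q+1)).get ⟨i, by omega⟩ > (l.drop (q+1)).get ⟨i+1, by omega⟩
    rw [List.get_eq_getElem, List.get_eq_getElem]
    simp only [Fin.val_mk]
    rw [List.getElem_drop, List.getElem_drop]
    have hcl := claim2 (q+1+i) (by omega) (by omega)
    show l[q+1+i]'(by omega) > l[q+1+(i+1)]'(by omega)
    have e1 : l[q+1+i]'(by omega) = l.getD (q+1+i) 0 := (List.getD_eq_getElem _ _ (by omega)).symm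
    have e2 : l[q+1+(i+1)]'(by omega) = l.getD (q+1+(i+1)) 0 := (List.getD_eq_getElem _ _ (by omega)).symm
    rw [e1, e2]
    have hidx : q+1+(i+1) = (q+1+i)+1 := by omega
    rw [hidx]
    exact hcl
  have hnd2 : (l.take (q+1) ++ l.drop (q+1)).Nodup := by
    rw [List.take_append_drop]; exact hnd
  have hdisj : ∀ x ∈ l.take (q+1), x ∉ l.drop (q+1) := (List.nodup_append'.1 hnd2).2.2
  have htk_fin : (l.take (q+1)).toFinset = Finset.range m \ T := by
    ext x
    rw [Finset.mem_sdiff, Finset.mem_range]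
    constructor
    · intro hx
      rw [List.mem_toFinset] at hx
      have hxl : x ∈ l := List.mem_of_mem_take hx
      refine ⟨?_, ?_⟩
      · have := List.mem_toFinset.2 hxl
        rw [htf, Finset.mem_range] at this
        exact this
      · intro hxT
        exact hdisj x hx (List.mem_toFinset.1 (hTdef ▸ hxT))
    · rintro ⟨hxm, hxT⟩
      have hxl : x ∈ l := by
        rw [← List.mem_toFinset, htf, Finset.mem_range]; exact hxm
      have hxl2 : x ∈ l.take (q+1) ++ l.drop (q+1) := by
        rw [List.take_append_drop]; exact hxl
      rw [List.mem_toFinset]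
      rcases List.mem_append.1 hxl2 with h | h
      · exact h
      · exact absurd (hTdef ▸ List.mem_toFinset.2 h) hxT
  have htk_eq : l.take (q+1) = ((Finset.range (m-1)) \ T).sort (·≤·) ++ [m-1] := by
    apply chain_lt_unique chain_tk (mkUD_left_chain m T)
    rw [htk_fin]
    ext x
    simp only [List.toFinset_append, Finset.sort_toFinset, List.toFinset_cons, List.toFinset_nil,
      LawfulSingleton.insert_empty_eq, Finset.mem_union, Finset.mem_sdiff, Finset.mem_range,
      Finset.mem_singleton]
    constructor
    · rintro ⟨h1, h2⟩
      by_cases hx2 : x = m - 1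
      · right; exact hx2
      · left; exact ⟨by omega, h2⟩
    · rintro (⟨⟨h1, h2⟩⟩ | rfl)
      · exact ⟨by omega, h2⟩
      · exact ⟨by omega, hm1T⟩
  have hdr_eq : l.drop (q+1) = (T.sort (·≤·)).reverse := by
    have hrev : (l.drop (q+1)).reverse = T.sort (·≤·) := by
      apply chain_lt_unique ?_ (sort_chain_lt T)
      · rw [List.toFinset_reverse, Finset.sort_toFinset, hTdef]
      · unfold List.Chain'; rw [List.isChain_reverse]
        exact chain_dr
    rw [← hrev, List.reverse_reverse]
  refine ⟨hTsub, ?_⟩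
  rw [mkUD, ← htk_eq, ← hdr_eq, List.take_append_drop]

lemma cnt_zero {m : ℕ} (hm : 1 ≤ m) : cnt (Finset.range m) 0 = 2 ^ (m - 1) := by
  have hcard : ((Finset.range (m-1)).powerset).card = 2 ^ (m-1) := by
    rw [Finset.card_powerset, Finset.card_range]
  rw [← hcard, cnt]
  refine Finset.card_bij' (fun l _ => pickT m l) (fun T _ => mkUD m T) ?_ ?_ ?_ ?_
  · intro l hl
    rw [Finset.mem_filter] at hl
    rw [Finset.mem_powerset]
    exact (structure_noval hm hl.1 ((good_zero_iff l).1 hl.2)).1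
  · intro T hT
    rw [Finset.mem_powerset] at hT
    rw [Finset.mem_filter]
    exact ⟨mkUD_mem hm hT,
      (good_zero_iff _).2 (noval_updown (mkUD_left_chain m T) (mkUD_right_chain T))⟩
  · intro l hl
    rw [Finset.mem_filter] at hl
    exact ((structure_noval hm hl.1 ((good_zero_iff l).1 hl.2)).2).symm
  · intro T hT
    rw [Finset.mem_powerset] at hT
    exact pickT_mkUD hT

/-! Splitting -/

lemma length_split (u v : List ℕ) : (u ++ 0 :: v).length = u.length + 1 + v.length := by
  rw [List.length_append, List.length_cons]; omega

lemma getD_split_mid (u v : List ℕ) : (u ++ 0 :: v).getD u.length 0 = 0 := by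
  rw [getD_append_right (le_refl _), Nat.sub_self, List.getD_cons_zero]

lemma getD_split_right (u v : List ℕ) (j : ℕ) :
    (u ++ 0 :: v).getD (u.length + 1 + j) 0 = v.getD j 0 := by
  rw [getD_append_right (by omega)]
  have h : u.length + 1 + j - u.length = j + 1 := by omega
  rw [h, List.getD_cons_succ]

lemma VAt_split_left {u : List ℕ} (v : List ℕ) {i : ℕ} (h : i + 1 < u.length) :
    VAt (u ++ 0 :: v) i ↔ VAt u i := by
  unfold VAt
  rw [length_split]
  constructor
  · rintro ⟨h1, -, h3, h4⟩
    rw [getD_append_left (by omega : i < u.length),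
      getD_append_left (by omega : i - 1 < u.length)] at h3
    rw [getD_append_left (by omega : i < u.length),
      getD_append_left (by omega : i + 1 < u.length)] at h4
    exact ⟨h1, h, h3, h4⟩
  · rintro ⟨h1, h2, h3, h4⟩
    refine ⟨h1, by omega, ?_, ?_⟩
    · rw [getD_append_left (by omega : i < u.length),
        getD_append_left (by omega : i - 1 < u.length)]
      exact h3
    · rw [getD_append_left (by omega : i < u.length),
        getD_append_left (by omega : i + 1 < u.length)]
      exact h4

lemma not_VAt_split_pred (u v : List ℕ) : ¬ VAt (u ++ 0 :: v) (u.length - 1) := by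
  rintro ⟨h1, h2, h3, h4⟩
  rcases Nat.eq_zero_or_pos u.length with hp | hp
  · rw [hp] at h1; omega
  · have he : u.length - 1 + 1 = u.length := by omega
    rw [he, getD_split_mid] at h4
    omega

lemma not_VAt_split_succ (u v : List ℕ) : ¬ VAt (u ++ 0 :: v) (u.length + 1) := by
  rintro ⟨h1, h2, h3, h4⟩
  have he : u.length + 1 - 1 = u.length := by omega
  rw [he, getD_split_mid] at h3
  omega

lemma VAt_split_mid {u v : List ℕ} (hu : ∀ x ∈ u, 0 < x) (hv : ∀ x ∈ v, 0 < x)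
    (hune : u ≠ []) (hvne : v ≠ []) : VAt (u ++ 0 :: v) u.length := by
  have hul : 0 < u.length := List.length_pos_iff.2 hune
  have hvl : 0 < v.length := List.length_pos_iff.2 hvne
  refine ⟨hul, by rw [length_split]; omega, ?_, ?_⟩
  · rw [getD_split_mid, getD_append_left (by omega : u.length - 1 < u.length)]
    exact hu _ (getD_mem (by omega))
  · rw [getD_split_mid]
    show 0 < (u ++ 0 :: v).getD (u.length + 1 + 0) 0
    rw [getD_split_right]
    exact hv _ (getD_mem (by omega))

lemma VAt_split_right (u v : List ℕ) (j : ℕ) :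
    VAt (u ++ 0 :: v) (u.length + 1 + j) ↔ VAt v j := by
  rcases Nat.eq_zero_or_pos j with rfl | hj
  · constructor
    · intro h
      exact absurd (by simpa using h) (not_VAt_split_succ u v)
    · rintro ⟨h1, -⟩; omega
  · unfold VAt
    rw [length_split]
    have e1 : u.length + 1 + j - 1 = u.length + 1 + (j-1) := by omega
    have e2 : u.length + 1 + j + 1 = u.length + 1 + (j+1) := by omega
    rw [e1, e2, getD_split_right, getD_split_right, getD_split_right]
    have e3 : j - 1 + 1 = j := by omega
    constructor
    · rintro ⟨-, h2, h3, h4⟩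
      exact ⟨hj, by omega, h3, h4⟩
    · rintro ⟨-, h2, h3, h4⟩
      exact ⟨by omega, by omega, h3, h4⟩

lemma VAt_cons (v : List ℕ) (j : ℕ) : VAt (0 :: v) (j + 1) ↔ VAt v j := by
  rcases Nat.eq_zero_or_pos j with rfl | hj
  · constructor
    · rintro ⟨-, -, h3, -⟩
      simp only [zero_add, List.getD_cons_succ] at h3
      norm_num at h3
    · rintro ⟨h1, -⟩; omega
  · unfold VAt
    simp only [List.length_cons, List.getD_cons_succ]
    have e1 : j + 1 - 1 = (j - 1) + 1 := by omega
    rw [e1, List.getD_cons_succ]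
    constructor
    · rintro ⟨-, h2, h3, h4⟩
      exact ⟨hj, by omega, h3, h4⟩
    · rintro ⟨-, h2, h3, h4⟩
      exact ⟨by omega, by omega, h3, h4⟩

lemma vset_cons (v : List ℕ) : vset (0 :: v) = (vset v).image (· + 1) := by
  ext i
  rw [mem_vset, Finset.mem_image]
  constructor
  · intro h
    have h1 := h.1
    obtain ⟨j, rfl⟩ : ∃ j, i = j + 1 := ⟨i - 1, by omega⟩
    exact ⟨j, mem_vset.2 ((VAt_cons v j).1 h), rfl⟩
  · rintro ⟨j, hj, rfl⟩
    exact (VAt_cons v j).2 (mem_vset.1 hj)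

lemma vset_concat (u : List ℕ) : vset (u ++ [0]) = vset u := by
  ext i
  rw [mem_vset, mem_vset]
  constructor
  · intro h
    have h2 := h.2.1
    rw [List.length_append, List.length_singleton] at h2
    rcases lt_trichotomy (i+1) u.length with hc | hc | hc
    · exact (VAt_split_left [] hc).1 h
    · exfalso
      have hnp := not_VAt_split_pred u []
      have he : u.length - 1 = i := by omega
      rw [he] at hnp
      exact hnp h
    · exfalso; omega
  · intro h
    exact (VAt_split_left [] h.2.1).2 h

lemma vset_split {u v : List ℕ} (hu : ∀ x ∈ u, 0 < x) (hv : ∀ x ∈ v, 0 < x)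
    (hune : u ≠ []) (hvne : v ≠ []) :
    vset (u ++ 0 :: v) = insert u.length ((vset u) ∪ (vset v).image (u.length + 1 + ·)) := by
  ext i
  rw [mem_vset, Finset.mem_insert, Finset.mem_union]
  simp only [Finset.mem_image]
  constructor
  · intro h
    have h1 := h.1
    by_cases hc1 : i + 1 < u.length
    · exact Or.inr (Or.inl (mem_vset.2 ((VAt_split_left v hc1).1 h)))
    · by_cases hc2 : i = u.length
      · exact Or.inl hc2
      · by_cases hc3 : i + 1 = u.length
        · exfalso
          have hnp := not_VAt_split_pred u v
          have he : u.length - 1 = i := by omega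
          rw [he] at hnp
          exact hnp h
        · obtain ⟨j, rfl⟩ : ∃ j, i = u.length + 1 + j := ⟨i - (u.length+1), by omega⟩
          exact Or.inr (Or.inr ⟨j, mem_vset.2 ((VAt_split_right u v j).1 h), rfl⟩)
  · rintro (rfl | hmem | ⟨j, hj, rfl⟩)
    · exact VAt_split_mid hu hv hune hvne
    · exact (VAt_split_left v (mem_vset.1 hmem).2.1).2 (mem_vset.1 hmem)
    · exact (VAt_split_right u v j).2 (mem_vset.1 hj)

lemma good_cons (v : List ℕ) (k : ℕ) : Good (0 :: v) k ↔ Good v k := by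
  unfold Good
  rw [vset_cons]
  rw [Finset.card_image_of_injective _ (fun a b (h : a + 1 = b + 1) => by omega)]
  constructor
  · rintro ⟨hc, hinc⟩
    refine ⟨hc, fun i hi j hj hij => ?_⟩
    have h := hinc (i+1) (Finset.mem_image_of_mem _ hi) (j+1) (Finset.mem_image_of_mem _ hj) (by omega)
    rwa [List.getD_cons_succ, List.getD_cons_succ] at h
  · rintro ⟨hc, hinc⟩
    refine ⟨hc, fun i hi j hj hij => ?_⟩
    simp only [Finset.mem_image] at hi hj
    obtain ⟨a, ha, rfl⟩ := hi
    obtain ⟨b, hb, rfl⟩ := hj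
    simp only [List.getD_cons_succ]
    exact hinc a ha b hb (by omega)

lemma good_concat (u : List ℕ) (k : ℕ) : Good (u ++ [0]) k ↔ Good u k := by
  unfold Good
  rw [vset_concat]
  have hgt : ∀ i ∈ vset u, (u ++ [0]).getD i 0 = u.getD i 0 := by
    intro i hi
    exact getD_append_left (by have := (mem_vset.1 hi).2.1; omega)
  constructor
  · rintro ⟨hc, hinc⟩
    refine ⟨hc, fun i hi j hj hij => ?_⟩
    have h := hinc i hi j hj hij
    rwa [hgt i hi, hgt j hj] at h
  · rintro ⟨hc, hinc⟩
    refine ⟨hc, fun i hi j hj hij => ?_⟩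
    rw [hgt i hi, hgt j hj]
    exact hinc i hi j hj hij

lemma good_split {u v : List ℕ} (hu : ∀ x ∈ u, 0 < x) (hv : ∀ x ∈ v, 0 < x)
    (hune : u ≠ []) (hvne : v ≠ []) (k : ℕ) :
    Good (u ++ 0 :: v) (k + 1) ↔ Good u 0 ∧ Good v k := by
  have hvs := vset_split hu hv hune hvne
  have hpnot2 : u.length ∉ (vset v).image (u.length + 1 + ·) := by
    simp only [Finset.mem_image]
    rintro ⟨j, -, hj⟩
    omega
  have himgcard : ((vset v).image (u.length + 1 + ·)).card = (vset v).card :=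
    Finset.card_image_of_injective _ (fun a b (h : u.length + 1 + a = u.length + 1 + b) => by omega)
  constructor
  · rintro ⟨hc, hinc⟩
    have hvu : vset u = ∅ := by
      rcases Finset.eq_empty_or_nonempty (vset u) with h | h
      · exact h
      · exfalso
        obtain ⟨i, hi⟩ := h
        have hiv : i ∈ vset (u ++ 0 :: v) := by
          rw [hvs]
          exact Finset.mem_insert_of_mem (Finset.mem_union_left _ hi)
        have hpv : u.length ∈ vset (u ++ 0 :: v) := by
          rw [hvs]; exact Finset.mem_insert_self _ _
        have hlt := hinc i hiv u.length hpv (by have := (mem_vset.1 hi).2.1; omega)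
        rw [getD_split_mid] at hlt
        omega
    have hvs2 : vset (u ++ 0 :: v) = insert u.length ((vset v).image (u.length + 1 + ·)) := by
      rw [hvs, hvu, Finset.empty_union]
    have hcv : (vset v).card = k := by
      rw [hvs2, Finset.card_insert_of_notMem hpnot2, himgcard] at hc
      omega
    refine ⟨⟨by rw [hvu]; exact Finset.card_empty, ?_⟩, hcv, ?_⟩
    · intro i hi
      rw [hvu] at hi
      exact absurd hi (Finset.notMem_empty i)
    · intro a ha b hb hab
      have hma : u.length + 1 + a ∈ vset (u ++ 0 :: v) := by
        rw [hvs2]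
        exact Finset.mem_insert_of_mem (Finset.mem_image_of_mem _ ha)
      have hmb : u.length + 1 + b ∈ vset (u ++ 0 :: v) := by
        rw [hvs2]
        exact Finset.mem_insert_of_mem (Finset.mem_image_of_mem _ hb)
      have h := hinc _ hma _ hmb (by omega)
      rwa [getD_split_right, getD_split_right] at h
  · rintro ⟨⟨hcu, -⟩, hcv, hincv⟩
    have hvu : vset u = ∅ := Finset.card_eq_zero.1 hcu
    have hvs2 : vset (u ++ 0 :: v) = insert u.length ((vset v).image (u.length + 1 + ·)) := by
      rw [hvs, hvu, Finset.empty_union]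
    constructor
    · rw [hvs2, Finset.card_insert_of_notMem hpnot2, himgcard, hcv]
    · intro i hi j hj hij
      rw [hvs2, Finset.mem_insert] at hi hj
      rcases hi with rfl | hi
      · rcases hj with rfl | hj
        · exact absurd hij (lt_irrefl _)
        · simp only [Finset.mem_image] at hj
          obtain ⟨b, hb, rfl⟩ := hj
          rw [getD_split_mid, getD_split_right]
          exact hv _ (getD_mem (by have := (mem_vset.1 hb).2.1; omega))
      · rcases hj with rfl | hj
        · simp only [Finset.mem_image] at hi
          obtain ⟨a, -, rfl⟩ := hi
          exfalso; omega
        · simp only [Finset.mem_image] at hi hj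
          obtain ⟨a, ha, rfl⟩ := hi
          obtain ⟨b, hb, rfl⟩ := hj
          rw [getD_split_right, getD_split_right]
          exact hincv a ha b hb (by omega)

/-! Fibers -/

def Afin (n k : ℕ) : Finset (List ℕ) := (arr (Finset.range n)).filter (fun l => Good l k)

lemma fiber_facts {n : ℕ} {l : List ℕ} (hl : l ∈ arr (Finset.range (n+1))) :
    ∀ p, l.idxOf 0 = p →
    p ≤ n ∧ l = l.take p ++ 0 :: l.drop (p+1) ∧
    (∀ x ∈ l.take p, 0 < x) ∧ (∀ x ∈ l.drop (p+1), 0 < x) ∧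
    (l.take p).length = p ∧ (l.drop (p+1)).length = n - p ∧
    (l.take p).toFinset = Finset.Icc 1 n \ (l.drop (p+1)).toFinset ∧
    (l.take p).Nodup ∧ (l.drop (p+1)).Nodup ∧
    (l.drop (p+1)).toFinset ⊆ Finset.Icc 1 n := by
  rintro p rfl
  obtain ⟨hnd, htf⟩ := mem_arr.1 hl
  have hlen : l.length = n + 1 := by rw [length_of_mem_arr hl, Finset.card_range]
  have h0 : (0:ℕ) ∈ l := by
    rw [← List.mem_toFinset, htf, Finset.mem_range]; omega
  have hq : l.idxOf 0 < l.length := List.idxOf_lt_length_iff.2 h0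
  have hgp : l[l.idxOf 0]'hq = 0 := List.getElem_idxOf hq
  have hub : ∀ x ∈ l, x ≤ n := by
    intro x hx
    have hm := List.mem_toFinset.2 hx
    rw [htf, Finset.mem_range] at hm
    omega
  have hpos1 : ∀ x ∈ l.take (l.idxOf 0), 0 < x := by
    intro x hx
    rw [List.mem_iff_getElem] at hx
    obtain ⟨i, hi, rfl⟩ := hx
    rw [List.length_take] at hi
    rw [List.getElem_take]
    rcases Nat.eq_zero_or_pos (l[i]'(by omega)) with h | h
    · exfalso
      have := hnd.getElem_inj_iff.1 (h.trans hgp.symm)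
      omega
    · exact h
  have hpos2 : ∀ x ∈ l.drop (l.idxOf 0 + 1), 0 < x := by
    intro x hx
    rw [List.mem_iff_getElem] at hx
    obtain ⟨i, hi, rfl⟩ := hx
    rw [List.length_drop] at hi
    rw [List.getElem_drop]
    rcases Nat.eq_zero_or_pos (l[l.idxOf 0 + 1 + i]'(by omega)) with h | h
    · exfalso
      have := hnd.getElem_inj_iff.1 (h.trans hgp.symm)
      omega
    · exact h
  have hdec : l = l.take (l.idxOf 0) ++ 0 :: l.drop (l.idxOf 0 + 1) := by
    conv_lhs => rw [← List.take_append_drop (l.idxOf 0) l]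
    rw [List.drop_eq_getElem_cons hq, hgp]
  have hnd3 : (l.take (l.idxOf 0) ++ 0 :: l.drop (l.idxOf 0 + 1)).Nodup := hdec ▸ hnd
  have hdisj := (List.nodup_append'.1 hnd3).2.2
  have hsub2 : (l.drop (l.idxOf 0 + 1)).toFinset ⊆ Finset.Icc 1 n := by
    intro x hx
    rw [List.mem_toFinset] at hx
    rw [Finset.mem_Icc]
    exact ⟨hpos2 x hx, hub x (List.mem_of_mem_drop hx)⟩
  refine ⟨by omega, hdec, hpos1, hpos2, by rw [List.length_take]; omega,
    by rw [List.length_drop]; omega, ?_, (List.take_sublist _ _).nodup hnd,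
    (List.drop_sublist _ _).nodup hnd, hsub2⟩
  ext x
  rw [List.mem_toFinset, Finset.mem_sdiff, Finset.mem_Icc, List.mem_toFinset]
  constructor
  · intro hx
    have hxl : x ∈ l := List.mem_of_mem_take hx
    refine ⟨⟨hpos1 x hx, hub x hxl⟩, ?_⟩
    intro hx2
    exact hdisj hx (List.mem_cons_of_mem _ hx2)
  · rintro ⟨⟨hx1, hx2⟩, hx3⟩
    have hxl : x ∈ l := by
      rw [← List.mem_toFinset, htf, Finset.mem_range]; omega
    rw [hdec] at hxl
    rcases List.mem_append.1 hxl with h | h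
    · exact h
    · rcases List.mem_cons.1 h with h2 | h2
      · omega
      · exact absurd h2 hx3

lemma cnt_Icc (n k : ℕ) : cnt (Finset.Icc 1 n) k = incVal n k := by
  have h := cnt_eq_range (Finset.Icc 1 n) k
  rw [Nat.card_Icc] at h
  rw [incVal_eq_cnt, h]
  norm_num

lemma cons_zero_mem_arr {n : ℕ} {v : List ℕ} (hv : v ∈ arr (Finset.Icc 1 n)) :
    (0 :: v) ∈ arr (Finset.range (n+1)) := by
  obtain ⟨hnd, htf⟩ := mem_arr.1 hv
  have hpos : ∀ x ∈ v, 0 < x := by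
    intro x hx
    have := List.mem_toFinset.2 hx
    rw [htf, Finset.mem_Icc] at this
    omega
  rw [mem_arr]
  constructor
  · rw [List.nodup_cons]
    exact ⟨fun h => absurd rfl (Nat.ne_of_gt (hpos 0 h)), hnd⟩
  · rw [List.toFinset_cons, htf]
    ext x
    rw [Finset.mem_insert, Finset.mem_Icc, Finset.mem_range]
    omega

lemma fiber_zero (n k : ℕ) :
    ((Afin (n+1) k).filter (fun l => l.idxOf 0 = 0)).card = incVal n k := by
  rw [← cnt_Icc n k, cnt]
  refine Finset.card_nbij (fun l => l.drop 1) ?_ ?_ ?_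
  · intro l hl
    simp only [Afin, Finset.mem_coe, Finset.mem_filter] at hl
    obtain ⟨⟨hla, hg⟩, hidx⟩ := hl
    obtain ⟨-, hdec, -, hpos2, -, -, hTf, -, hnd2, hsub2⟩ := fiber_facts hla 0 hidx
    rw [List.take_zero, List.nil_append] at hdec
    rw [List.take_zero, List.toFinset_nil] at hTf
    have hT2 : (l.drop (0+1)).toFinset = Finset.Icc 1 n := by
      refine Finset.Subset.antisymm hsub2 ?_
      rw [← Finset.sdiff_eq_empty_iff_subset, ← hTf]
    rw [Finset.mem_coe, Finset.mem_filter, mem_arr]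
    refine ⟨⟨hnd2, hT2⟩, ?_⟩
    have hgl : Good (0 :: l.drop (0+1)) k := by rw [← hdec]; exact hg
    exact (good_cons _ k).1 hgl
  · intro l1 h1 l2 h2 heq
    simp only [Finset.coe_filter, Set.mem_setOf_eq, Afin, Finset.mem_filter] at h1 h2
    obtain ⟨⟨hla1, -⟩, hidx1⟩ := h1
    obtain ⟨⟨hla2, -⟩, hidx2⟩ := h2
    obtain ⟨-, hdec1, -⟩ := fiber_facts hla1 0 hidx1
    obtain ⟨-, hdec2, -⟩ := fiber_facts hla2 0 hidx2
    rw [List.take_zero, List.nil_append] at hdec1 hdec2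
    rw [hdec1, hdec2]
    have heq' : l1.drop 1 = l2.drop 1 := heq
    rw [heq']
  · intro v hv
    simp only [Finset.coe_filter, Set.mem_setOf_eq, Finset.mem_coe, Finset.mem_filter] at hv
    obtain ⟨hva, hvg⟩ := hv
    refine ⟨0 :: v, ?_, by simp⟩
    simp only [Finset.coe_filter, Set.mem_setOf_eq, Afin, Finset.mem_filter]
    exact ⟨⟨cons_zero_mem_arr hva, (good_cons v k).2 hvg⟩, List.idxOf_cons_self⟩

lemma concat_zero_mem_arr {n : ℕ} {u : List ℕ} (hu : u ∈ arr (Finset.Icc 1 n)) :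
    (u ++ [0]) ∈ arr (Finset.range (n+1)) ∧ (u ++ [0]).idxOf 0 = u.length := by
  obtain ⟨hnd, htf⟩ := mem_arr.1 hu
  have hpos : ∀ x ∈ u, 0 < x := by
    intro x hx
    have := List.mem_toFinset.2 hx
    rw [htf, Finset.mem_Icc] at this
    omega
  have h0nu : (0:ℕ) ∉ u := fun h => absurd rfl (Nat.ne_of_gt (hpos 0 h))
  constructor
  · rw [mem_arr]
    constructor
    · rw [List.nodup_append']
      exact ⟨hnd, List.nodup_singleton _, fun x hx hx2 => by
        rw [List.mem_singleton] at hx2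
        subst hx2
        exact h0nu hx⟩
    · rw [List.toFinset_append, htf]
      ext x
      simp only [Finset.mem_union, Finset.mem_Icc, List.toFinset_cons, List.toFinset_nil,
        LawfulSingleton.insert_empty_eq, Finset.mem_singleton, Finset.mem_range]
      omega
  · rw [List.idxOf_append_of_notMem h0nu]
    show u.length + List.idxOf 0 (0 :: []) = u.length
    rw [List.idxOf_cons_self]
    omega

lemma fiber_last (n k : ℕ) :
    ((Afin (n+1) k).filter (fun l => l.idxOf 0 = n)).card = incVal n k := by
  rw [← cnt_Icc n k, cnt]
  refine Finset.card_nbij (fun l => l.take n) ?_ ?_ ?_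
  · intro l hl
    simp only [Afin, Finset.mem_coe, Finset.mem_filter] at hl
    obtain ⟨⟨hla, hg⟩, hidx⟩ := hl
    obtain ⟨-, hdec, -, -, hlen1, hlen2, hTf, hnd1, -, -⟩ := fiber_facts hla n hidx
    have hdrop : l.drop (n+1) = [] := List.eq_nil_of_length_eq_zero (by omega)
    rw [hdrop] at hdec hTf
    rw [List.toFinset_nil, Finset.sdiff_empty] at hTf
    rw [Finset.mem_coe, Finset.mem_filter, mem_arr]
    refine ⟨⟨hnd1, hTf⟩, ?_⟩
    have hgl : Good (l.take n ++ [0]) k := by rw [← hdec]; exact hg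
    exact (good_concat _ k).1 hgl
  · intro l1 h1 l2 h2 heq
    simp only [Finset.coe_filter, Set.mem_setOf_eq, Afin, Finset.mem_filter] at h1 h2
    obtain ⟨⟨hla1, -⟩, hidx1⟩ := h1
    obtain ⟨⟨hla2, -⟩, hidx2⟩ := h2
    obtain ⟨-, hdec1, -, -, -, hl12, -⟩ := fiber_facts hla1 n hidx1
    obtain ⟨-, hdec2, -, -, -, hl22, -⟩ := fiber_facts hla2 n hidx2
    have hd1 : l1.drop (n+1) = [] := List.eq_nil_of_length_eq_zero (by omega)
    have hd2 : l2.drop (n+1) = [] := List.eq_nil_of_length_eq_zero (by omega)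
    rw [hd1] at hdec1
    rw [hd2] at hdec2
    rw [hdec1, hdec2]
    have heq' : l1.take n = l2.take n := heq
    rw [heq']
  · intro u hu
    simp only [Finset.coe_filter, Set.mem_setOf_eq, Finset.mem_coe, Finset.mem_filter] at hu
    obtain ⟨hua, hug⟩ := hu
    have hul : u.length = n := by rw [length_of_mem_arr hua, Nat.card_Icc]; omega
    obtain ⟨hmem, hidx⟩ := concat_zero_mem_arr hua
    refine ⟨u ++ [0], ?_, ?_⟩
    · simp only [Finset.coe_filter, Set.mem_setOf_eq, Afin, Finset.mem_filter]
      refine ⟨⟨hmem, (good_concat u k).2 hug⟩, ?_⟩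
      show (u ++ [0]).idxOf 0 = n
      rw [hidx, hul]
    · show (u ++ [0]).take n = u
      rw [← hul]
      exact List.take_left' rfl

lemma split_mem_arr {n : ℕ} {S : Finset ℕ} (hS : S ⊆ Finset.Icc 1 n) {u v : List ℕ}
    (hu : u ∈ arr S) (hv : v ∈ arr (Finset.Icc 1 n \ S)) :
    (∀ x ∈ u, 0 < x) ∧ (∀ x ∈ v, 0 < x) ∧
    (u ++ 0 :: v) ∈ arr (Finset.range (n+1)) ∧ (u ++ 0 :: v).idxOf 0 = u.length := by
  obtain ⟨hnd1, htf1⟩ := mem_arr.1 hu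
  obtain ⟨hnd2, htf2⟩ := mem_arr.1 hv
  have hposu : ∀ x ∈ u, 0 < x := by
    intro x hx
    have h : x ∈ S := by rw [← htf1, List.mem_toFinset]; exact hx
    have := hS h
    rw [Finset.mem_Icc] at this
    omega
  have hposv : ∀ x ∈ v, 0 < x := by
    intro x hx
    have h : x ∈ Finset.Icc 1 n \ S := by rw [← htf2, List.mem_toFinset]; exact hx
    rw [Finset.mem_sdiff, Finset.mem_Icc] at h
    omega
  have h0u : (0:ℕ) ∉ u := fun h => absurd rfl (Nat.ne_of_gt (hposu 0 h))
  have h0v : (0:ℕ) ∉ v := fun h => absurd rfl (Nat.ne_of_gt (hposv 0 h))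
  refine ⟨hposu, hposv, ?_, ?_⟩
  · rw [mem_arr]
    constructor
    · rw [List.nodup_append']
      refine ⟨hnd1, ?_, ?_⟩
      · rw [List.nodup_cons]; exact ⟨h0v, hnd2⟩
      · intro x hx hx2
        rcases List.mem_cons.1 hx2 with rfl | h2
        · exact h0u hx
        · have hxS : x ∈ S := by rw [← htf1, List.mem_toFinset]; exact hx
          have hxV : x ∈ Finset.Icc 1 n \ S := by rw [← htf2, List.mem_toFinset]; exact h2
          rw [Finset.mem_sdiff] at hxV
          exact hxV.2 hxS
    · rw [List.toFinset_append, List.toFinset_cons, htf1, htf2]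
      ext x
      simp only [Finset.mem_union, Finset.mem_insert, Finset.mem_sdiff, Finset.mem_Icc,
        Finset.mem_range]
      constructor
      · rintro (h | rfl | ⟨⟨h1, h2⟩, -⟩)
        · have := hS h; rw [Finset.mem_Icc] at this; omega
        · omega
        · omega
      · intro h
        by_cases h0 : x = 0
        · right; left; exact h0
        · by_cases hxS : x ∈ S
          · left; exact hxS
          · right; right; exact ⟨⟨by omega, by omega⟩, hxS⟩
  · rw [List.idxOf_append_of_notMem h0u]
    show u.length + List.idxOf 0 (0 :: v) = u.length
    rw [List.idxOf_cons_self]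
    omega

lemma fiber_mid (n k p : ℕ) (hp1 : 1 ≤ p) (hp2 : p ≤ n - 1) (hn : 1 ≤ n) (hk : 1 ≤ k) :
    ((Afin (n+1) k).filter (fun l => l.idxOf 0 = p)).card
      = n.choose p * (2^(p-1) * incVal (n-p) (k-1)) := by
  have hmap : ∀ l ∈ (Afin (n+1) k).filter (fun l => l.idxOf 0 = p),
      (l.take p).toFinset ∈ (Finset.Icc 1 n).powersetCard p := by
    intro l hl
    simp only [Afin, Finset.mem_filter] at hl
    obtain ⟨⟨hla, -⟩, hidx⟩ := hl
    obtain ⟨hpn, -, -, -, hlen1, -, hTf, hnd1, -, -⟩ := fiber_facts hla p hidx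
    rw [Finset.mem_powersetCard]
    constructor
    · rw [hTf]; exact Finset.sdiff_subset
    · rw [List.toFinset_card_of_nodup hnd1, hlen1]
  rw [Finset.card_eq_sum_card_fiberwise hmap]
  have hfib : ∀ S ∈ (Finset.Icc 1 n).powersetCard p,
      (((Afin (n+1) k).filter (fun l => l.idxOf 0 = p)).filter
        (fun l => (l.take p).toFinset = S)).card = 2^(p-1) * incVal (n-p) (k-1) := by
    intro S hS
    rw [Finset.mem_powersetCard] at hS
    obtain ⟨hSsub, hScard⟩ := hS
    have hc1 : cnt S 0 = 2^(p-1) := by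
      rw [cnt_eq_range, hScard, cnt_zero hp1]
    have hcompcard : (Finset.Icc 1 n \ S).card = n - p := by
      rw [Finset.card_sdiff_of_subset hSsub, Nat.card_Icc, hScard]
      omega
    have hc2 : cnt (Finset.Icc 1 n \ S) (k-1) = incVal (n-p) (k-1) := by
      rw [cnt_eq_range, hcompcard, ← incVal_eq_cnt]
    rw [← hc1, ← hc2, cnt, cnt, ← Finset.card_product]
    refine Finset.card_nbij (fun l => (l.take p, l.drop (p+1))) ?_ ?_ ?_
    · intro l hl
      simp only [Finset.mem_coe, Finset.mem_filter, Afin] at hl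
      obtain ⟨⟨⟨hla, hg⟩, hidx⟩, hSl⟩ := hl
      obtain ⟨hpn, hdec, hpos1, hpos2, hlen1, hlen2, hTf, hnd1, hnd2, hsub2⟩ :=
        fiber_facts hla p hidx
      rw [Finset.mem_coe, Finset.mem_product]
      have hune : l.take p ≠ [] := by
        intro h; rw [h] at hlen1; simp only [List.length_nil] at hlen1; omega
      have hvne : l.drop (p+1) ≠ [] := by
        intro h; rw [h] at hlen2; simp only [List.length_nil] at hlen2; omega
      have hgood : Good (l.take p) 0 ∧ Good (l.drop (p+1)) (k-1) := by
        have hke : (k-1)+1 = k := by omega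
        have hg2 : Good (l.take p ++ 0 :: l.drop (p+1)) ((k-1)+1) := by
          rw [← hdec, hke]; exact hg
        exact (good_split hpos1 hpos2 hune hvne (k-1)).1 hg2
      constructor
      · rw [Finset.mem_filter, mem_arr]
        exact ⟨⟨hnd1, hSl⟩, hgood.1⟩
      · rw [Finset.mem_filter, mem_arr]
        refine ⟨⟨hnd2, ?_⟩, hgood.2⟩
        have hS2 : S = Finset.Icc 1 n \ (l.drop (p+1)).toFinset := by rw [← hSl, hTf]
        ext x
        rw [Finset.mem_sdiff]
        constructor
        · intro hx
          refine ⟨hsub2 hx, ?_⟩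
          rw [hS2, Finset.mem_sdiff]
          rintro ⟨-, h2⟩
          exact h2 hx
        · rintro ⟨hx1, hx2⟩
          rw [hS2, Finset.mem_sdiff] at hx2
          push_neg at hx2
          exact hx2 hx1
    · intro l1 h1 l2 h2 heq
      simp only [Finset.coe_filter, Set.mem_setOf_eq, Finset.mem_filter, Afin] at h1 h2
      obtain ⟨⟨⟨hla1, -⟩, hidx1⟩, -⟩ := h1
      obtain ⟨⟨⟨hla2, -⟩, hidx2⟩, -⟩ := h2
      obtain ⟨-, hdec1, -⟩ := fiber_facts hla1 p hidx1
      obtain ⟨-, hdec2, -⟩ := fiber_facts hla2 p hidx2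
      have ht : l1.take p = l2.take p := congrArg Prod.fst heq
      have hd : l1.drop (p+1) = l2.drop (p+1) := congrArg Prod.snd heq
      rw [hdec1, hdec2, ht, hd]
    · rintro ⟨u, v⟩ huv
      rw [Finset.mem_coe, Finset.mem_product] at huv
      obtain ⟨hu, hv⟩ := huv
      rw [Finset.mem_filter] at hu hv
      obtain ⟨hua, hug⟩ := hu
      obtain ⟨hva, hvg⟩ := hv
      have hul : u.length = p := by rw [length_of_mem_arr hua, hScard]
      have hvl : v.length = n - p := by rw [length_of_mem_arr hva, hcompcard]
      obtain ⟨hposu, hposv, hmem, hidx⟩ := split_mem_arr hSsub hua hva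
      have hune : u ≠ [] := by
        intro h; rw [h] at hul; simp only [List.length_nil] at hul; omega
      have hvne : v ≠ [] := by
        intro h; rw [h] at hvl; simp only [List.length_nil] at hvl; omega
      have h1 : (u ++ 0 :: v).take p = u := List.take_left' hul
      have h2 : (u ++ 0 :: v).drop (p+1) = v := by
        rw [List.append_cons]
        exact List.drop_left' (by rw [List.length_append, List.length_singleton]; omega)
      refine ⟨u ++ 0 :: v, ?_, ?_⟩
      · simp only [Finset.coe_filter, Set.mem_setOf_eq, Finset.mem_filter, Afin]
        refine ⟨⟨⟨hmem, ?_⟩, by rw [hidx, hul]⟩, ?_⟩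
        · have hke : (k-1)+1 = k := by omega
          have hgl := (good_split hposu hposv hune hvne (k-1)).2 ⟨hug, hvg⟩
          rwa [hke] at hgl
        · rw [h1]
          exact (mem_arr.1 hua).2
      · show ((u ++ 0 :: v).take p, (u ++ 0 :: v).drop (p+1)) = (u, v)
        rw [h1, h2]
  rw [Finset.sum_congr rfl hfib, Finset.sum_const, Finset.card_powersetCard, Nat.card_Icc,
    smul_eq_mul]
  norm_num

lemma incVal_zero : incVal 0 0 = 1 := by
  rw [incVal_eq_cnt]
  have harr : arr (Finset.range 0) = {[]} := by
    rw [arr, Finset.range_zero, Finset.sort_empty, List.permutations_nil]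
    rfl
  have hg : Good ([] : List ℕ) 0 := by
    constructor
    · simp [vset]
    · intro i hi
      rw [mem_vset] at hi
      exact absurd hi.2.1 (by simp)
  rw [cnt, harr, Finset.filter_singleton, if_pos hg, Finset.card_singleton]

lemma main_rec (n k : ℕ) (hn : 1 ≤ n) (hk : 1 ≤ k) :
    incVal (n+1) k = 2 * incVal n k +
      ∑ i ∈ Finset.Icc 1 (n-1), n.choose i * 2^(i-1) * incVal (n-i) (k-1) := by
  have hAcard : incVal (n+1) k = (Afin (n+1) k).card := incVal_eq_cnt (n+1) k
  have hfw : ∀ l ∈ Afin (n+1) k, l.idxOf 0 ∈ Finset.range (n+1) := by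
    intro l hl
    simp only [Afin, Finset.mem_filter] at hl
    have hlen : l.length = n + 1 := by rw [length_of_mem_arr hl.1, Finset.card_range]
    have h0 : (0:ℕ) ∈ l := by
      rw [← List.mem_toFinset, (mem_arr.1 hl.1).2, Finset.mem_range]; omega
    rw [Finset.mem_range, ← hlen]
    exact List.idxOf_lt_length_iff.2 h0
  rw [hAcard, Finset.card_eq_sum_card_fiberwise hfw]
  have hset : Finset.range (n+1) = insert 0 (insert n (Finset.Icc 1 (n-1))) := by
    ext x
    simp only [Finset.mem_range, Finset.mem_insert, Finset.mem_Icc]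
    omega
  rw [hset, Finset.sum_insert (by simp only [Finset.mem_insert, Finset.mem_Icc]; omega),
    Finset.sum_insert (by simp only [Finset.mem_Icc]; omega)]
  rw [fiber_zero n k, fiber_last n k]
  have hsum : ∑ i ∈ Finset.Icc 1 (n-1), ((Afin (n+1) k).filter (fun l => l.idxOf 0 = i)).card
      = ∑ i ∈ Finset.Icc 1 (n-1), n.choose i * 2^(i-1) * incVal (n-i) (k-1) := by
    refine Finset.sum_congr rfl ?_
    intro i hi
    rw [Finset.mem_Icc] at hi
    rw [fiber_mid n k i hi.1 hi.2 hn hk]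
    ring
  rw [hsum]
  ring

end IncValAux

theorem incVal_recurrence :
    incVal 0 0 = 1 ∧ (∀ n : ℕ, 1 ≤ n → incVal n 0 = 2 ^ (n - 1)) ∧
    ∀ n k : ℕ, 1 ≤ n → 1 ≤ k →
      incVal (n + 1) k = 2 * incVal n k +
        ∑ i ∈ Finset.Icc 1 (n - 1), n.choose i * 2 ^ (i - 1) * incVal (n - i) (k - 1) := by
  refine ⟨IncValAux.incVal_zero, ?_, ?_⟩
  · intro n hn
    rw [IncValAux.incVal_eq_cnt, IncValAux.cnt_zero hn]
  · intro n k hn hk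
    obtain ⟨m, rfl⟩ : ∃ m, n = m + 1 := ⟨n - 1, by omega⟩
    have h := IncValAux.main_rec (m+1) k (by omega) hk
    simpa using h
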